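/- For a powerset-enriched monad T, a T-monoid (X, α), and a T-algebra (V, q), the set [X,V] of T-monoid homomorphisms f : (X,α) → (V, q*) is closed under arbitrary pointwise infima in V^X: if S ⊆ [X,V] then the pointwise infimum ⋀S is again a T-monoid homomorphism. -/
import Mathlib


universe u

/-- A powerset-enriched monad on `Set`: a monad `(T, η, μ)` together with a monad
morphism `τ` from the powerset monad. -/
structure PSEM : Type (u + 1) where
  T : Type u → Type u
  map : ∀ {X Y : Type u}, (X → Y) → T X → T Y
  η : ∀ {X : Type u}, X → T X
  μ : ∀ {X : Type u}, T (T X) → T X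
  τ : ∀ {X : Type u}, Set X → T X
  map_id : ∀ {X : Type u} (t : T X), map id t = t
  map_comp : ∀ {X Y Z : Type u} (f : X → Y) (g : Y → Z) (t : T X),
    map (g ∘ f) t = map g (map f t)
  η_nat : ∀ {X Y : Type u} (f : X → Y) (x : X), map f (η x) = η (f x)
  μ_nat : ∀ {X Y : Type u} (f : X → Y) (t : T (T X)),
    map f (μ t) = μ (map (map f) t)
  unit_left : ∀ {X : Type u} (t : T X), μ (η t) = t
  unit_right : ∀ {X : Type u} (t : T X), μ (map η t) = t
  assoc : ∀ {X : Type u} (t : T (T (T X))), μ (μ t) = μ (map μ t)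
  τ_nat : ∀ {X Y : Type u} (f : X → Y) (A : Set X), map f (τ A) = τ (f '' A)
  τ_η : ∀ {X : Type u} (x : X), τ ({x} : Set X) = η x
  τ_μ : ∀ {X : Type u} (𝒮 : Set (Set X)), τ (⋃₀ 𝒮) = μ (map τ (τ 𝒮))

namespace PSEM

variable (M : PSEM.{u})

/-- The supremum map `μ_X ∘ τ_{TX} : P(TX) → TX` on `T X`. -/
def ksup {X : Type u} (S : Set (M.T X)) : M.T X := M.μ (M.τ S)

/-- The order induced on `T X` by the sup-semilattice structure `μ_X ∘ τ_{TX}`. -/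
def kle {X : Type u} (t t' : M.T X) : Prop := M.ksup {t, t'} = t'

/-- The order induced on a `T`-algebra `(V, q)` by the sup-semilattice structure
`q ∘ τ_V`. -/
def algLe {V : Type u} (q : M.T V → V) (v w : V) : Prop := q (M.τ {v, w}) = w

/-- Infima in a `T`-algebra `(V, q)`, computed as the supremum of the lower bounds. -/
def algInf {V : Type u} (q : M.T V → V) (S : Set V) : V :=
  q (M.τ {v | ∀ w ∈ S, M.algLe q v w})

end PSEM

namespace PSEM

section Aux

variable (M : PSEM.{u}) {V : Type u} (q : M.T V → V)

lemma sup_singleton (hq1 : ∀ v : V, q (M.η v) = v) (v : V) : q (M.τ {v}) = v := by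
  rw [M.τ_η, hq1]

lemma sup_sUnion (hq2 : ∀ t : M.T (M.T V), q (M.μ t) = q (M.map q t))
    (𝒮 : Set (Set V)) :
    q (M.τ (⋃₀ 𝒮)) = q (M.τ ((fun s => q (M.τ s)) '' 𝒮)) := by
  rw [M.τ_μ, hq2, ← M.map_comp, M.τ_nat]
  rfl

lemma algLe_refl (hq1 : ∀ v : V, q (M.η v) = v) (v : V) : M.algLe q v v := by
  unfold algLe
  rw [Set.pair_eq_singleton, sup_singleton M q hq1]

lemma algLe_trans (hq1 : ∀ v : V, q (M.η v) = v)
    (hq2 : ∀ t : M.T (M.T V), q (M.μ t) = q (M.map q t)) {u v w : V} (h1 : M.algLe q u v) (h2 : M.algLe q v w) :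
    M.algLe q u w := by
  unfold algLe at *
  have e1 : ({u, v, w} : Set V) = ⋃₀ {({u, v} : Set V), {w}} := by
    ext y; simp [Set.sUnion_pair]; tauto
  have e2 : ({u, v, w} : Set V) = ⋃₀ {({u} : Set V), {v, w}} := by
    ext y; simp [Set.sUnion_pair]; tauto
  have A1 : q (M.τ ({u, v, w} : Set V)) = w := by
    rw [e1, sup_sUnion M q hq2, Set.image_pair, h1, sup_singleton M q hq1, h2]
  have A2 : q (M.τ ({u, v, w} : Set V)) = q (M.τ {u, w}) := by
    rw [e2, sup_sUnion M q hq2, Set.image_pair, sup_singleton M q hq1, h2]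
  rw [← A2, A1]

lemma le_sup (hq1 : ∀ v : V, q (M.η v) = v)
    (hq2 : ∀ t : M.T (M.T V), q (M.μ t) = q (M.map q t)) {s : Set V} {v : V} (h : v ∈ s) : M.algLe q v (q (M.τ s)) := by
  unfold algLe
  have e : ({v, q (M.τ s)} : Set V) = (fun t => q (M.τ t)) '' {({v} : Set V), s} := by
    rw [Set.image_pair, sup_singleton M q hq1]
  rw [e, ← sup_sUnion M q hq2, Set.sUnion_pair]
  congr 1
  rw [Set.singleton_union, Set.insert_eq_self.2 h]

lemma sup_le (hq1 : ∀ v : V, q (M.η v) = v)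
    (hq2 : ∀ t : M.T (M.T V), q (M.μ t) = q (M.map q t)) {s : Set V} {w : V} (h : ∀ v ∈ s, M.algLe q v w) :
    M.algLe q (q (M.τ s)) w := by
  have key : q (M.τ (insert w s)) = w := by
    have e1 : insert w s = ⋃₀ ((fun v => ({v, w} : Set V)) '' insert w s) := by
      ext y
      simp only [Set.mem_sUnion, Set.mem_image]
      constructor
      · intro hy; exact ⟨{y, w}, ⟨y, hy, rfl⟩, Or.inl rfl⟩
      · rintro ⟨t, ⟨v, hv, rfl⟩, hy⟩
        rcases hy with rfl | rfl
        · exact hv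
        · exact Set.mem_insert _ _
    have e2 : (fun t => q (M.τ t)) '' ((fun v => ({v, w} : Set V)) '' insert w s)
        = {w} := by
      rw [← Set.image_comp]
      ext y
      simp only [Set.mem_image, Function.comp, Set.mem_singleton_iff]
      constructor
      · rintro ⟨v, hv, rfl⟩
        rcases hv with rfl | hv
        · exact algLe_refl M q hq1 v
        · exact h v hv
      · intro hy
        exact ⟨w, Set.mem_insert _ _, by rw [hy]; exact algLe_refl M q hq1 w⟩
    rw [e1, sup_sUnion M q hq2, e2, sup_singleton M q hq1]
  unfold algLe
  have e : ({q (M.τ s), w} : Set V) = (fun t => q (M.τ t)) '' {s, ({w} : Set V)} := by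
    rw [Set.image_pair, sup_singleton M q hq1]
  rw [e, ← sup_sUnion M q hq2, Set.sUnion_pair, Set.union_singleton, key]

lemma inf_le (hq1 : ∀ v : V, q (M.η v) = v)
    (hq2 : ∀ t : M.T (M.T V), q (M.μ t) = q (M.map q t)) {S : Set V} {w : V} (hw : w ∈ S) : M.algLe q (M.algInf q S) w := by
  unfold algInf
  exact sup_le M q hq1 hq2 (fun v hv => hv w hw)

lemma le_inf (hq1 : ∀ v : V, q (M.η v) = v)
    (hq2 : ∀ t : M.T (M.T V), q (M.μ t) = q (M.map q t)) {S : Set V} {v : V} (h : ∀ w ∈ S, M.algLe q v w) :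
    M.algLe q v (M.algInf q S) := by
  unfold algInf
  exact le_sup M q hq1 hq2 h

lemma q_kle (hq2 : ∀ t : M.T (M.T V), q (M.μ t) = q (M.map q t)) {t t' : M.T V} (h : M.kle t t') : M.algLe q (q t) (q t') := by
  unfold kle ksup at h
  unfold algLe
  have e : ({q t, q t'} : Set V) = q '' {t, t'} := (Set.image_pair q t t').symm
  rw [e, ← M.τ_nat, ← hq2, h]

lemma kle_τ {Y : Type u} {A B : Set Y} (h : A ∪ B = B) : M.kle (M.τ A) (M.τ B) := by
  unfold kle ksup
  have e : ({M.τ A, M.τ B} : Set (M.T Y)) = M.τ '' {A, B} := (Set.image_pair M.τ A B).symm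
  rw [e, ← M.τ_nat, ← M.τ_μ, Set.sUnion_pair, h]

lemma map_mono (hq1 : ∀ v : V, q (M.η v) = v)
    (hq2 : ∀ t : M.T (M.T V), q (M.μ t) = q (M.map q t))
    (enr : ∀ {X Y : Type u} (f g : X → M.T Y),
      (∀ x, M.kle (f x) (g x)) →
      ∀ t : M.T X, M.kle (M.μ (M.map f t)) (M.μ (M.map g t)))
    {X : Type u} {g f : X → V} (h : ∀ x, M.algLe q (g x) (f x)) (t : M.T X) :
    M.algLe q (q (M.map g t)) (q (M.map f t)) := by
  set φ : X → M.T V := fun x => M.τ {g x}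
  set ψ : X → M.T V := fun x => M.τ {g x, f x}
  have hk : ∀ x, M.kle (φ x) (ψ x) := by
    intro x
    apply kle_τ
    ext y; simp; tauto
  have h1 : M.kle (M.μ (M.map φ t)) (M.μ (M.map ψ t)) := enr φ ψ hk t
  have h2 := q_kle M q hq2 h1
  have eg : (q ∘ φ) = g := funext fun x => sup_singleton M q hq1 (g x)
  have ef : (q ∘ ψ) = f := funext fun x => h x
  have eφ : q (M.μ (M.map φ t)) = q (M.map g t) := by
    rw [hq2, ← M.map_comp, eg]
  have eψ : q (M.μ (M.map ψ t)) = q (M.map f t) := by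
    rw [hq2, ← M.map_comp, ef]
  rwa [eφ, eψ] at h2

end Aux

end PSEM

/-- For a powerset-enriched monad `T`, a `T`-monoid `(X, α)` and a `T`-algebra
`(V, q)`, the set `[X,V]` of `T`-monoid homomorphisms `f : (X,α) → (V, q*)`
(i.e. maps with `q ∘ Tf ∘ α ≤ f`) is closed under arbitrary pointwise infima
in `V^X`: the pointwise infimum of any `S ⊆ [X,V]` is again a homomorphism. -/
theorem homset_closed_under_infima (M : PSEM.{u})
    (enr : ∀ {X Y : Type u} (f g : X → M.T Y),
      (∀ x, M.kle (f x) (g x)) →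
      ∀ t : M.T X, M.kle (M.μ (M.map f t)) (M.μ (M.map g t)))
    {X V : Type u}
    (q : M.T V → V)
    (hq1 : ∀ v : V, q (M.η v) = v)
    (hq2 : ∀ t : M.T (M.T V), q (M.μ t) = q (M.map q t))
    (α : X → M.T X)
    (hrefl : ∀ x : X, M.kle (M.η x) (α x))
    (htrans : ∀ x : X, M.kle (M.μ (M.map α (α x))) (α x))
    (S : Set (X → V))
    (hS : ∀ f ∈ S, ∀ x : X, M.algLe q (q (M.map f (α x))) (f x)) :
    ∀ x : X,
      M.algLe q
        (q (M.map (fun y : X => M.algInf q ((fun f : X → V => f y) '' S)) (α x)))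
        (M.algInf q ((fun f : X → V => f x) '' S)) := by
  intro x
  set g : X → V := fun y : X => M.algInf q ((fun f : X → V => f y) '' S) with hg
  apply PSEM.le_inf M q hq1 hq2
  rintro w ⟨f, hf, rfl⟩
  have hmono : ∀ y, M.algLe q (g y) (f y) := fun y =>
    PSEM.inf_le M q hq1 hq2 ⟨f, hf, rfl⟩
  have h1 : M.algLe q (q (M.map g (α x))) (q (M.map f (α x))) :=
    PSEM.map_mono M q hq1 hq2 enr hmono (α x)
  exact PSEM.algLe_trans M q hq1 hq2 h1 (hS f hf x)
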